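/- Let {(u_i, v_i)}_{i=1}^{m} be a sequence of edge insertions into an initially empty forest, where each insertion joins two distinct trees. Then ∑_{i=1}^{m} min{deg_{i−1}(u_i), deg_{i−1}(v_i)} ≤ m, where deg_{i−1} denotes the degree in the forest just before the i-th insertion. -/

import Mathlib

open Finset SimpleGraph

namespace Stmt12Aux

variable {V : Type*} [Fintype V] [DecidableEq V]

/-- Instance-free degree. -/
noncomputable def nd (G : SimpleGraph V) (w : V) : ℕ := (G.neighborSet w).ncard

lemma nd_eq (G : SimpleGraph V) [DecidableRel G.Adj] (w : V) : nd G w = G.degree w := by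
  rw [nd, SimpleGraph.degree, SimpleGraph.neighborFinset, Set.ncard_eq_toFinset_card']

open Classical in
/-- Max degree over a connected component. -/
noncomputable def md (G : SimpleGraph V) (c : G.ConnectedComponent) : ℕ :=
  Finset.univ.sup (fun w => if G.connectedComponentMk w = c then nd G w else 0)

open Classical in
/-- Sum over components of max degree. -/
noncomputable def S (G : SimpleGraph V) : ℕ :=
  ∑ c ∈ Finset.univ.image G.connectedComponentMk, md G c

lemma nd_bot (w : V) : nd (⊥ : SimpleGraph V) w = 0 := by
  have : (⊥ : SimpleGraph V).neighborSet w = ∅ := by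
    ext x; simp [SimpleGraph.mem_neighborSet]
  rw [nd, this, Set.ncard_empty]

lemma S_bot : S (⊥ : SimpleGraph V) = 0 := by
  classical
  refine Finset.sum_eq_zero fun c _ => ?_
  rw [md]
  refine Nat.eq_zero_of_le_zero (Finset.sup_le fun w _ => ?_)
  split_ifs <;> simp [nd_bot]

lemma reach_sup_edge {G : SimpleGraph V} {u v x y : V}
    (h : (G ⊔ edge u v).Reachable x y) :
    G.Reachable x y ∨ (G.Reachable x u ∧ G.Reachable v y) ∨
      (G.Reachable x v ∧ G.Reachable u y) := by
  obtain ⟨p⟩ := h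
  induction p with
  | nil => exact Or.inl (Reachable.refl _)
  | @cons a b c h q ih =>
    rcases h with hG | hE
    · have hab : G.Reachable a b := hG.reachable
      rcases ih with h1 | ⟨h2a, h2b⟩ | ⟨h3a, h3b⟩
      · exact Or.inl (hab.trans h1)
      · exact Or.inr (Or.inl ⟨hab.trans h2a, h2b⟩)
      · exact Or.inr (Or.inr ⟨hab.trans h3a, h3b⟩)
    · rw [edge_adj] at hE
      rcases hE.1 with ⟨ha, hb⟩ | ⟨ha, hb⟩
      · subst ha; subst hb
        rcases ih with h1 | ⟨h2a, h2b⟩ | ⟨h3a, h3b⟩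
        · exact Or.inr (Or.inl ⟨Reachable.refl _, h1⟩)
        · exact Or.inr (Or.inl ⟨Reachable.refl _, h2b⟩)
        · exact Or.inl h3b
      · subst ha; subst hb
        rcases ih with h1 | ⟨h2a, h2b⟩ | ⟨h3a, h3b⟩
        · exact Or.inr (Or.inr ⟨Reachable.refl _, h1⟩)
        · exact Or.inl h2b
        · exact Or.inr (Or.inr ⟨Reachable.refl _, h3b⟩)

lemma neighborSet_sup_edge (G : SimpleGraph V) (u v w : V) :
    (G ⊔ edge u v).neighborSet w = G.neighborSet w ∪ (edge u v).neighborSet w := by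
  ext x; simp [SimpleGraph.mem_neighborSet, SimpleGraph.sup_adj]

lemma nd_sup_edge_le (G : SimpleGraph V) (u v w : V) :
    nd (G ⊔ edge u v) w ≤ nd G w + 1 := by
  rw [nd, neighborSet_sup_edge]
  refine (Set.ncard_union_le _ _).trans ?_
  have : ((edge u v).neighborSet w).ncard ≤ 1 := by
    by_cases hu : w = u
    · subst hu
      refine le_trans (Set.ncard_le_ncard (t := {v}) ?_) (by simp)
      intro x hx; rw [SimpleGraph.mem_neighborSet, edge_adj] at hx
      rcases hx.1 with ⟨h1, h2⟩ | ⟨h1, h2⟩ <;> simp_all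
    · by_cases hv : w = v
      · subst hv
        refine le_trans (Set.ncard_le_ncard (t := {u}) ?_) (by simp)
        intro x hx; rw [SimpleGraph.mem_neighborSet, edge_adj] at hx
        rcases hx.1 with ⟨h1, h2⟩ | ⟨h1, h2⟩ <;> simp_all
      · have : (edge u v).neighborSet w = ∅ := by
          ext x
          simp only [SimpleGraph.mem_neighborSet, edge_adj, Set.mem_empty_iff_false, iff_false,
            not_and, not_not]
          rintro ⟨⟨h1, h2⟩ | ⟨h1, h2⟩, -⟩ <;> simp_all
        simp [this]
  calc (G.neighborSet w).ncard + ((edge u v).neighborSet w).ncard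
      ≤ (G.neighborSet w).ncard + 1 := by omega
    _ = nd G w + 1 := rfl

lemma nd_sup_edge_of_ne {G : SimpleGraph V} {u v w : V} (hu : w ≠ u) (hv : w ≠ v) :
    nd (G ⊔ edge u v) w = nd G w := by
  rw [nd, nd, neighborSet_sup_edge]
  have : (edge u v).neighborSet w = ∅ := by
    ext x
    simp only [SimpleGraph.mem_neighborSet, edge_adj, Set.mem_empty_iff_false, iff_false,
      not_and, not_not]
    rintro ⟨⟨h1, h2⟩ | ⟨h1, h2⟩, -⟩ <;> simp_all
  rw [this, Set.union_empty]

lemma S_step {G : SimpleGraph V} {u v : V} (hnr : ¬ G.Reachable u v) :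
    S (G ⊔ edge u v) + min (nd G u) (nd G v) ≤ S G + 1 := by
  classical
  have hne : u ≠ v := fun h => hnr (h ▸ Reachable.refl u)
  set G' := G ⊔ edge u v with hG'
  have hle : G ≤ G' := le_sup_left
  have mono : ∀ {x y : V}, G.Reachable x y → G'.Reachable x y := fun h => h.mono hle
  have hadj : G'.Adj u v := by
    rw [hG', SimpleGraph.sup_adj, edge_adj]; exact Or.inr ⟨Or.inl ⟨rfl, rfl⟩, hne⟩
  set mk : V → G.ConnectedComponent := G.connectedComponentMk with hmk
  set mk' : V → G'.ConnectedComponent := G'.connectedComponentMk with hmk'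
  set φ : G.ConnectedComponent → G'.ConnectedComponent :=
    ConnectedComponent.map (SimpleGraph.Hom.ofLE hle) with hφ
  have hφmk : ∀ w : V, φ (mk w) = mk' w := fun w => rfl
  have hmkvu : mk' v = mk' u := ConnectedComponent.connectedComponentMk_eq_of_adj hadj.symm
  -- key facts
  have key1 : ∀ w : V, mk' w = mk' u → mk w = mk u ∨ mk w = mk v := by
    intro w hw
    have hr : G'.Reachable w u := ConnectedComponent.exact hw
    rcases reach_sup_edge hr with h1 | ⟨h2a, h2b⟩ | ⟨h3a, h3b⟩
    · exact Or.inl (ConnectedComponent.sound h1)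
    · exact Or.inl (ConnectedComponent.sound h2a)
    · exact Or.inr (ConnectedComponent.sound h3a)
  have key2 : ∀ w x : V, mk' w = mk' x → mk' w ≠ mk' u → mk w = mk x := by
    intro w x hwx hwu
    have hr : G'.Reachable w x := ConnectedComponent.exact hwx
    rcases reach_sup_edge hr with h1 | ⟨h2a, h2b⟩ | ⟨h3a, h3b⟩
    · exact ConnectedComponent.sound h1
    · exact absurd (ConnectedComponent.sound (mono h2a)) hwu
    · exact absurd ((ConnectedComponent.sound (mono h3a)).trans hmkvu) hwu
  -- degree bounds inside components
  have nd_le_md : ∀ w : V, nd G w ≤ md G (mk w) := by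
    intro w
    have h := Finset.le_sup (f := fun x => if mk x = mk w then nd G x else 0)
      (Finset.mem_univ w)
    simpa [md] using h
  have nd_le_md' : ∀ w x : V, mk w = mk x → nd G w ≤ md G (mk x) := by
    intro w x h; have := nd_le_md w; rwa [h] at this
  set I : Finset G.ConnectedComponent := Finset.univ.image mk with hI
  set I' : Finset G'.ConnectedComponent := Finset.univ.image mk' with hI'
  have hmaps : ∀ c ∈ I, φ c ∈ I' := by
    intro c hc
    obtain ⟨w, -, rfl⟩ := Finset.mem_image.mp hc
    exact Finset.mem_image.mpr ⟨w, Finset.mem_univ w, (hφmk w).symm ▸ rfl⟩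
  have hfib : ∑ c' ∈ I', ∑ c ∈ I.filter (fun c => φ c = c'), md G c = ∑ c ∈ I, md G c :=
    Finset.sum_fiberwise_of_maps_to hmaps (md G)
  -- pointwise inequality
  have main : ∀ c' ∈ I',
      md G' c' + (if c' = mk' u then min (nd G u) (nd G v) else 0) ≤
        (∑ c ∈ I.filter (fun c => φ c = c'), md G c) + (if c' = mk' u then 1 else 0) := by
    intro c' hc'
    by_cases hcu : c' = mk' u
    · subst hcu
      rw [if_pos rfl, if_pos rfl]
      have hmne : mk u ≠ mk v := fun h => hnr (ConnectedComponent.exact h)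
      have hmemu : mk u ∈ I.filter (fun c => φ c = mk' u) := by
        refine Finset.mem_filter.mpr ⟨Finset.mem_image.mpr ⟨u, Finset.mem_univ u, rfl⟩, ?_⟩
        rw [hφmk]
      have hmemv : mk v ∈ I.filter (fun c => φ c = mk' u) := by
        refine Finset.mem_filter.mpr ⟨Finset.mem_image.mpr ⟨v, Finset.mem_univ v, rfl⟩, ?_⟩
        rw [hφmk, hmkvu]
      have hT : md G (mk u) + md G (mk v) ≤ ∑ c ∈ I.filter (fun c => φ c = mk' u), md G c := by
        rw [← Finset.sum_pair hmne]
        refine Finset.sum_le_sum_of_subset ?_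
        intro c hc
        rcases Finset.mem_insert.mp hc with rfl | hc
        · exact hmemu
        · rw [Finset.mem_singleton.mp hc]; exact hmemv
      have h1 : nd G u ≤ md G (mk u) := nd_le_md u
      have h2 : nd G v ≤ md G (mk v) := nd_le_md v
      have h3 : md G' (mk' u) ≤ max (md G (mk u)) (md G (mk v)) + 1 := by
        rw [md]
        refine Finset.sup_le fun w _ => ?_
        split_ifs with h
        · rcases key1 w h with hw | hw
          · calc nd G' w ≤ nd G w + 1 := nd_sup_edge_le G u v w
              _ ≤ md G (mk u) + 1 := by have := nd_le_md' w u hw; omega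
              _ ≤ max (md G (mk u)) (md G (mk v)) + 1 := by omega
          · calc nd G' w ≤ nd G w + 1 := nd_sup_edge_le G u v w
              _ ≤ md G (mk v) + 1 := by have := nd_le_md' w v hw; omega
              _ ≤ max (md G (mk u)) (md G (mk v)) + 1 := by omega
        · exact Nat.zero_le _
      omega
    · rw [if_neg hcu, if_neg hcu]
      obtain ⟨w₀, -, hw₀⟩ := Finset.mem_image.mp hc'
      have hmem : mk w₀ ∈ I.filter (fun c => φ c = c') := by
        refine Finset.mem_filter.mpr ⟨Finset.mem_image.mpr ⟨w₀, Finset.mem_univ w₀, rfl⟩, ?_⟩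
        rw [hφmk, hw₀]
      have hT : md G (mk w₀) ≤ ∑ c ∈ I.filter (fun c => φ c = c'), md G c :=
        Finset.single_le_sum (fun c _ => Nat.zero_le _) hmem
      have h3 : md G' c' ≤ md G (mk w₀) := by
        rw [md]
        refine Finset.sup_le fun w _ => ?_
        split_ifs with h
        · have hwu : w ≠ u := by rintro rfl; exact hcu h.symm
          have hwv : w ≠ v := by rintro rfl; exact hcu (hmkvu ▸ h.symm)
          have hww₀ : mk w = mk w₀ := key2 w w₀ (h.trans hw₀.symm) (fun hwu => hcu (h.symm.trans hwu))
          rw [nd_sup_edge_of_ne hwu hwv]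
          exact nd_le_md' w w₀ hww₀
        · exact Nat.zero_le _
      omega
  -- sum up
  have hsum := Finset.sum_le_sum main
  rw [Finset.sum_add_distrib, Finset.sum_add_distrib] at hsum
  have hmem : mk' u ∈ I' := Finset.mem_image.mpr ⟨u, Finset.mem_univ u, rfl⟩
  rw [Finset.sum_ite_eq' I' (mk' u) (fun _ => min (nd G u) (nd G v)), if_pos hmem,
    Finset.sum_ite_eq' I' (mk' u) (fun _ => 1), if_pos hmem, hfib] at hsum
  exact hsum

end Stmt12Aux

open Stmt12Aux in
theorem stmt12 {V : Type*} [Fintype V] [DecidableEq V] (m : ℕ)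
    (F : ℕ → SimpleGraph V) [∀ i, DecidableRel (F i).Adj]
    (u v : ℕ → V)
    (h0 : F 0 = ⊥)
    (hstep : ∀ i < m, F (i + 1) = F i ⊔ SimpleGraph.fromEdgeSet {s(u (i + 1), v (i + 1))})
    (hsep : ∀ i < m, ¬ (F i).Reachable (u (i + 1)) (v (i + 1))) :
    ∑ i ∈ Finset.range m, min ((F i).degree (u (i + 1))) ((F i).degree (v (i + 1))) ≤ m := by
  have key : ∀ k ≤ m,
      (∑ i ∈ Finset.range k, min (nd (F i) (u (i + 1))) (nd (F i) (v (i + 1)))) + S (F k) ≤ k := by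
    intro k
    induction k with
    | zero => intro _; simp [h0, S_bot]
    | succ k ih =>
      intro hk
      have hk' : k < m := hk
      have hFk : F (k + 1) = F k ⊔ SimpleGraph.edge (u (k + 1)) (v (k + 1)) := hstep k hk'
      have hstep' := S_step (hsep k hk')
      rw [← hFk] at hstep'
      rw [Finset.sum_range_succ]
      have := ih (Nat.le_of_lt hk')
      omega
  have h1 := key m le_rfl
  have h2 : ∑ i ∈ Finset.range m, min ((F i).degree (u (i + 1))) ((F i).degree (v (i + 1))) =
      ∑ i ∈ Finset.range m, min (nd (F i) (u (i + 1))) (nd (F i) (v (i + 1))) :=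
    Finset.sum_congr rfl fun i _ => by rw [nd_eq, nd_eq]
  omega
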